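/- There exists a constant C_S > 0 such that for all N ∈ ℕ the operator norm of the Shannon partial-sum operator S_N from PW^1_π into the bounded functions satisfies ‖S_N‖ = sup{ sup_{t∈ℝ} |(S_N f)(t)| : f ∈ PW^1_π, ‖f‖_{PW^1_π} ≤ 1 } ≥ C_S · log N. -/

import Mathlib

open MeasureTheory Filter Topology Real Complex
open scoped ENNReal NNReal

noncomputable section

/-- The normalized sinc function `sin(πx)/(πx)` (with value `1` at `x = 0`). -/
def sincπ (x : ℝ) : ℝ := if x = 0 then 1 else Real.sin (π * x) / (π * x)

/-- `f` belongs to the Paley–Wiener space `PW^p_σ`: it is the inverse Fourier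
transform of some `g ∈ L^p([-σ, σ])`. -/
def IsPW (p : ℝ≥0∞) (σ : ℝ) (f : ℂ → ℂ) : Prop :=
  ∃ g : ℝ → ℂ, MemLp g p (volume.restrict (Set.Icc (-σ) σ)) ∧
    ∀ z : ℂ, f z = ((1 / (2 * π) : ℝ) : ℂ) *
      ∫ ω in Set.Icc (-σ) σ, g ω * Complex.exp (Complex.I * (ω : ℂ) * z)

/-- The symmetric partial sum of degree `N` of the Shannon sampling series. -/
def shannonSum (f : ℂ → ℂ) (N : ℕ) (t : ℝ) : ℂ :=
  ∑ n ∈ Finset.Icc (-(N : ℤ)) (N : ℤ), f (n : ℂ) * ((sincπ (t - n) : ℝ) : ℂ)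

/-- The Paley–Wiener function with Fourier transform `g ∈ L^1([-π,π])`. -/
def pwFun (g : ℝ → ℂ) (z : ℂ) : ℂ :=
  ((1 / (2 * π) : ℝ) : ℂ) * ∫ ω in Set.Icc (-π) π, g ω * Complex.exp (Complex.I * (ω : ℂ) * z)

lemma key_integral (m : ℤ) :
    (∫ ω in Set.Icc (-π:ℝ) π, Complex.exp (Complex.I * m * ω)) =
      if m = 0 then ((2*π:ℝ):ℂ) else 0 := by
  rw [MeasureTheory.integral_Icc_eq_integral_Ioc,
    ← intervalIntegral.integral_of_le (by linarith [Real.pi_pos] : (-π:ℝ) ≤ π)]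
  by_cases hm : m = 0
  · simp [hm, two_mul]
  · rw [if_neg hm]
    have hc : (Complex.I * m) ≠ 0 := by
      simp [Complex.I_ne_zero, Complex.ext_iff, hm]
    rw [integral_exp_mul_complex hc]
    have h1 : Complex.I * m * (π:ℝ) = m * ((π:ℝ) * Complex.I) := by ring
    have h2 : Complex.I * m * ((-π:ℝ):ℂ) = ((-m : ℤ) : ℂ) * ((π:ℝ) * Complex.I) := by push_cast; ring
    rw [h1, h2, Complex.exp_int_mul, Complex.exp_int_mul, Complex.exp_pi_mul_I]
    have : ((-1:ℂ))^(-m) = (-1:ℂ)^m := by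
      rw [zpow_neg]
      rcases Int.even_or_odd m with h | h
    -- fix below
      · rw [h.neg_one_zpow]; norm_num
      · rw [Odd.neg_one_zpow h]; norm_num
    rw [this, sub_self, zero_div]

lemma neg_one_zpow_neg (m : ℤ) : ((-1:ℂ))^(-m) = (-1:ℂ)^m := by
  rw [zpow_neg]
  rcases Int.even_or_odd m with h | h
  · rw [h.neg_one_zpow]; norm_num
  · rw [Odd.neg_one_zpow h]; norm_num

/-- exponential `e^{im(ω-π)}` -/
def eθ (m : ℤ) (ω : ℝ) : ℂ := Complex.exp (Complex.I * m * ((ω:ℂ) - π))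

lemma eθ_mul (m k : ℤ) (ω : ℝ) : eθ m ω * eθ k ω = eθ (m + k) ω := by
  rw [eθ, eθ, eθ, ← Complex.exp_add]
  congr 1; push_cast; ring

lemma eθ_conj (k : ℤ) (ω : ℝ) : (starRingEnd ℂ) (eθ k ω) = eθ (-k) ω := by
  rw [eθ, eθ, ← Complex.exp_conj]
  congr 1
  simp only [map_mul, map_sub, Complex.conj_I, Complex.conj_ofReal, map_intCast]
  push_cast; ring

lemma eθ_cont (m : ℤ) : Continuous (eθ m) := by
  unfold eθ; fun_prop

lemma int2 (m n : ℤ) :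
    (∫ ω in Set.Icc (-π:ℝ) π, eθ m ω * Complex.exp (Complex.I * n * ω)) =
      if m + n = 0 then ((-1:ℂ))^m * ((2*π:ℝ):ℂ) else 0 := by
  have hfac : ∀ ω : ℝ, eθ m ω * Complex.exp (Complex.I * n * ω) =
      (-1:ℂ)^m * Complex.exp (Complex.I * ((m + n : ℤ):ℂ) * ω) := by
    intro ω
    have h1 : ((-1:ℂ))^m = Complex.exp (Complex.I * m * (-(π:ℂ))) := by
      have : Complex.I * m * (-(π:ℂ)) = (-m : ℤ) * ((π:ℝ) * Complex.I) := by push_cast; ring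
      rw [this, Complex.exp_int_mul, Complex.exp_pi_mul_I, neg_one_zpow_neg]
    rw [h1, eθ, ← Complex.exp_add, ← Complex.exp_add]
    congr 1; push_cast; ring
  simp_rw [hfac]
  rw [integral_const_mul, key_integral]
  by_cases h : m + n = 0 <;> simp [h]

/-- Dirichlet-type sum -/
def dSum (M : ℕ) (ω : ℝ) : ℂ := ∑ j ∈ Finset.Icc (0:ℤ) M, eθ j ω

/-- (shifted) Fejér kernel -/
def fejG (M : ℕ) (ω : ℝ) : ℂ := ((M:ℂ)+1)⁻¹ * (dSum M ω * (starRingEnd ℂ) (dSum M ω))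

lemma fejG_eq_ofReal (M : ℕ) (ω : ℝ) :
    fejG M ω = ((((M:ℝ)+1)⁻¹ * Complex.normSq (dSum M ω) : ℝ) : ℂ) := by
  rw [fejG, Complex.mul_conj]
  push_cast
  ring

lemma dSum_cont (M : ℕ) : Continuous (dSum M) :=
  continuous_finset_sum _ fun m _ => eθ_cont m

lemma fejG_cont (M : ℕ) : Continuous (fejG M) := by
  unfold fejG
  exact continuous_const.mul ((dSum_cont M).mul (Complex.continuous_conj.comp (dSum_cont M)))

lemma intOn (m n : ℤ) : MeasureTheory.IntegrableOn
    (fun ω : ℝ => eθ m ω * Complex.exp (Complex.I * n * ω)) (Set.Icc (-π) π) volume := by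
  apply Continuous.integrableOn_Icc
  exact (eθ_cont m).mul (by fun_prop)

/-- number of surviving frequencies -/
def cardJ (M : ℕ) (n : ℤ) : ℕ :=
  ((Finset.Icc (0:ℤ) M).filter (fun j => j + n ∈ Finset.Icc (0:ℤ) M)).card

lemma pw_eval (M : ℕ) (n : ℤ) :
    pwFun (fejG M) (n:ℂ) = (-1:ℂ)^n * (((cardJ M n : ℝ) / ((M:ℝ)+1) : ℝ) : ℂ) := by
  have hexp : ∀ ω : ℝ, fejG M ω * Complex.exp (Complex.I * ω * n) =
      ((M:ℂ)+1)⁻¹ * ∑ j ∈ Finset.Icc (0:ℤ) M, ∑ k ∈ Finset.Icc (0:ℤ) M,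
        eθ (j - k) ω * Complex.exp (Complex.I * n * ω) := by
    intro ω
    rw [fejG, dSum, map_sum]
    simp_rw [eθ_conj, Finset.sum_mul_sum, mul_assoc]
    congr 1
    rw [Finset.sum_mul]
    refine Finset.sum_congr rfl fun j _ => ?_
    rw [Finset.sum_mul]
    refine Finset.sum_congr rfl fun k _ => ?_
    rw [← mul_assoc, eθ_mul, ← sub_eq_add_neg]
    congr 2
    ring
  rw [pwFun]
  simp_rw [hexp]
  rw [integral_const_mul,
    MeasureTheory.integral_finset_sum _
      (fun j _ => MeasureTheory.integrable_finset_sum _ (fun k _ => intOn (j-k) n))]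
  simp_rw [MeasureTheory.integral_finset_sum _ (fun k _ => intOn _ n), int2]
  have hstep : ∀ j ∈ Finset.Icc (0:ℤ) M,
      (∑ k ∈ Finset.Icc (0:ℤ) M,
        if j - k + n = 0 then ((-1:ℂ))^(j-k) * ((2*π:ℝ):ℂ) else 0) =
      (if j + n ∈ Finset.Icc (0:ℤ) M then ((-1:ℂ))^n * ((2*π:ℝ):ℂ) else 0) := by
    intro j _
    rw [show (∑ k ∈ Finset.Icc (0:ℤ) M,
        if j - k + n = 0 then ((-1:ℂ))^(j-k) * ((2*π:ℝ):ℂ) else 0) =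
        ∑ k ∈ Finset.Icc (0:ℤ) M,
        if k = j + n then ((-1:ℂ))^(j-k) * ((2*π:ℝ):ℂ) else 0 from
      Finset.sum_congr rfl fun k _ => if_congr (by omega) rfl rfl]
    rw [Finset.sum_ite_eq' (Finset.Icc (0:ℤ) M) (j+n)]
    have : j - (j + n) = -n := by ring
    rw [this, neg_one_zpow_neg]
  rw [Finset.sum_congr rfl hstep, Finset.sum_ite, Finset.sum_const, Finset.sum_const_zero,
    add_zero, nsmul_eq_mul, ← cardJ]
  have hπ : (π:ℂ) ≠ 0 := by
    simpa using Real.pi_ne_zero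
  have hM : ((M:ℂ)+1) ≠ 0 := by
    exact Nat.cast_add_one_ne_zero M
  push_cast
  field_simp

lemma cardJ_zero (M : ℕ) : cardJ M 0 = M + 1 := by
  unfold cardJ
  rw [Finset.filter_true_of_mem (fun j hj => by simpa using hj)]
  rw [Int.card_Icc]
  omega

lemma cardJ_ge (N : ℕ) (n : ℤ) (hn : |n| ≤ (N:ℤ)) : N + 1 ≤ cardJ (2*N) n := by
  unfold cardJ
  have hsub : Finset.Icc (max 0 (-n)) (max 0 (-n) + N) ⊆
      (Finset.Icc (0:ℤ) (2*N:ℕ)).filter (fun j => j + n ∈ Finset.Icc (0:ℤ) (2*N:ℕ)) := by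
    intro j hj
    simp only [Finset.mem_Icc, Finset.mem_filter] at *
    rw [abs_le] at hn
    push_cast at *
    omega
  have h1 := Finset.card_le_card hsub
  rw [Int.card_Icc] at h1
  omega

/-- real version of the Fejér kernel -/
def hfun (M : ℕ) (ω : ℝ) : ℝ := ((M:ℝ)+1)⁻¹ * Complex.normSq (dSum M ω)

lemma hfun_nonneg (M : ℕ) (ω : ℝ) : 0 ≤ hfun M ω := by
  exact mul_nonneg (by positivity) (Complex.normSq_nonneg _)

lemma hfun_int (M : ℕ) : MeasureTheory.IntegrableOn (hfun M) (Set.Icc (-π) π) volume := by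
  apply Continuous.integrableOn_Icc
  exact continuous_const.mul (Complex.continuous_normSq.comp (dSum_cont M))

lemma fejG_memLp (M : ℕ) : MemLp (fejG M) 1 (volume.restrict (Set.Icc (-π) π)) := by
  rw [memLp_one_iff_integrable]
  have := (hfun_int M).ofReal (𝕜 := ℂ)
  refine this.congr (Filter.Eventually.of_forall fun ω => ?_)
  rw [fejG_eq_ofReal]; rfl

lemma hfun_integral (M : ℕ) : ∫ ω in Set.Icc (-π:ℝ) π, hfun M ω = 2 * π := by
  have h0 := pw_eval M 0
  rw [pwFun] at h0
  simp only [Int.cast_zero, cardJ_zero] at h0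
  have hM : ((M:ℝ)+1) ≠ 0 := by positivity
  have h1 : ((M+1:ℕ):ℝ) / ((M:ℝ)+1) = 1 := by push_cast; field_simp
  rw [h1] at h0
  simp only [zpow_zero, Complex.ofReal_one, mul_one, one_mul, mul_comm] at h0
  -- h0 : (1/(2π)) * ∫ fejG ω * exp(I ω 0) = 1
  have h2 : (∫ ω in Set.Icc (-π:ℝ) π, fejG M ω * Complex.exp (Complex.I * (ω:ℂ) * (0:ℂ)))
      = ((∫ ω in Set.Icc (-π:ℝ) π, hfun M ω : ℝ) : ℂ) := by
    rw [MeasureTheory.integral_congr_ae (g := fun ω => ((hfun M ω : ℝ):ℂ))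
      (Filter.Eventually.of_forall fun ω => by simp [fejG_eq_ofReal, hfun])]
    exact integral_ofReal
  rw [h2] at h0
  have h3 : (1 / (π * 2)) * (∫ ω in Set.Icc (-π:ℝ) π, hfun M ω) = 1 := by
    exact_mod_cast h0
  have hπ : π ≠ 0 := Real.pi_ne_zero
  field_simp at h3
  linarith

lemma fejG_eLpNorm (M : ℕ) :
    eLpNorm (fejG M) 1 (volume.restrict (Set.Icc (-π) π)) ≤ ENNReal.ofReal (2 * π) := by
  rw [eLpNorm_one_eq_lintegral_enorm]
  have heq : ∀ ω : ℝ, (‖fejG M ω‖ₑ) = ENNReal.ofReal (hfun M ω) := by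
    intro ω
    rw [fejG_eq_ofReal, ← ofReal_norm, Complex.norm_real, Real.norm_eq_abs]
    exact congrArg ENNReal.ofReal (_root_.abs_of_nonneg (hfun_nonneg M ω))
  simp_rw [heq]
  rw [← MeasureTheory.ofReal_integral_eq_lintegral_ofReal (hfun_int M)
    (Filter.Eventually.of_forall (hfun_nonneg M))]
  rw [hfun_integral]

lemma sinc_eval (N : ℕ) (n : ℤ) (hn : n ≤ (N:ℤ)) :
    sincπ ((N:ℝ) + 1/2 - n) = (-1:ℝ)^((N:ℤ) - n) / (π * ((N:ℝ) + 1/2 - n)) := by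
  have hnr : (n:ℝ) ≤ N := by exact_mod_cast hn
  have hpos : (0:ℝ) < (N:ℝ) + 1/2 - n := by linarith
  rw [sincπ, if_neg hpos.ne']
  congr 1
  have h : π * ((N:ℝ) + 1/2 - n) = π/2 + ((((N:ℤ) - n : ℤ)) : ℝ) * π := by push_cast; ring
  rw [h, Real.sin_add_int_mul_pi, Real.sin_pi_div_two, mul_one]

lemma harmonic_cast (m : ℕ) :
    (harmonic m : ℝ) = ∑ i ∈ Finset.Icc 1 m, ((i:ℝ))⁻¹ := by
  rw [harmonic_eq_sum_Icc]
  push_cast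
  rfl

lemma sum_inv_eq_harmonic (N : ℕ) :
    ∑ n ∈ Finset.Icc (-(N:ℤ)) (N:ℤ), ((N:ℝ) + 1 - n)⁻¹ = (harmonic (2*N+1) : ℝ) := by
  rw [harmonic_cast]
  refine Finset.sum_nbij' (i := fun n => ((N:ℤ) + 1 - n).toNat)
    (j := fun k => (N:ℤ) + 1 - k) ?_ ?_ ?_ ?_ ?_
  · intro n hn; simp only [Finset.mem_Icc] at *; omega
  · intro k hk; simp only [Finset.mem_Icc] at *; omega
  · intro n hn; simp only [Finset.mem_Icc] at hn; omega
  · intro k hk; simp only [Finset.mem_Icc] at hk; omega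
  · intro n hn
    simp only [Finset.mem_Icc] at hn
    congr 1
    have : ((((N:ℤ) + 1 - n).toNat : ℤ) : ℝ) = ((N:ℝ) + 1 - n) := by
      rw [Int.toNat_of_nonneg (by omega)]; push_cast; ring
    exact_mod_cast this.symm

lemma shannon_lower (N : ℕ) :
    (2*π)⁻¹ * Real.log N ≤ ‖shannonSum (pwFun (fejG (2*N))) N ((N:ℝ) + 1/2)‖ := by
  have hπ := Real.pi_pos
  set t : ℝ := (N:ℝ) + 1/2 with ht
  set r : ℤ → ℝ := fun n => (cardJ (2*N) n : ℝ) / (((2*N:ℕ):ℝ) + 1) with hrdef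
  have hterm : ∀ n ∈ Finset.Icc (-(N:ℤ)) (N:ℤ),
      pwFun (fejG (2*N)) (n:ℂ) * ((sincπ (t - n) : ℝ) : ℂ)
        = (-1:ℂ)^((N:ℤ)) * (((r n / (π * (t - n))) : ℝ) : ℂ) := by
    intro n hn
    simp only [Finset.mem_Icc] at hn
    rw [pw_eval, ht, sinc_eval N n hn.2]
    have h1 : (-1:ℂ)^(n:ℤ) * (-1:ℂ)^((N:ℤ)-n) = (-1:ℂ)^((N:ℤ)) := by
      rw [← zpow_add₀ (by norm_num : (-1:ℂ) ≠ 0)]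
      congr 1; ring
    rw [← h1]
    simp only [hrdef]
    push_cast
    ring
  rw [shannonSum, Finset.sum_congr rfl hterm, ← Finset.mul_sum, ← Complex.ofReal_sum,
    norm_mul, norm_zpow, norm_neg, norm_one, one_zpow, one_mul, Complex.norm_real,
    Real.norm_eq_abs]
  refine le_trans ?_ (le_abs_self _)
  have hstep : ∀ n ∈ Finset.Icc (-(N:ℤ)) (N:ℤ),
      (2*π)⁻¹ * ((N:ℝ) + 1 - n)⁻¹ ≤ r n / (π * (t - n)) := by
    intro n hn
    simp only [Finset.mem_Icc] at hn
    have hnr : (n:ℝ) ≤ N := by exact_mod_cast hn.2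
    have hpos : (0:ℝ) < t - n := by rw [ht]; linarith
    have hpos2 : (0:ℝ) < (N:ℝ) + 1 - n := by linarith
    have hr : 1/2 ≤ r n := by
      have hc := cardJ_ge N n (abs_le.mpr hn)
      have hc' : ((N:ℝ) + 1) ≤ (cardJ (2*N) n : ℝ) := by exact_mod_cast hc
      rw [hrdef]
      have hD : (0:ℝ) < ((2*N:ℕ):ℝ) + 1 := by positivity
      rw [le_div_iff₀ hD]
      push_cast
      linarith
    have key : (2*π)⁻¹ * ((N:ℝ)+1-n)⁻¹ = (1/2) / (π * ((N:ℝ)+1-n)) := by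
      field_simp
    rw [key]
    exact div_le_div₀ (by linarith) hr (by positivity)
      (mul_le_mul_of_nonneg_left (by rw [ht]; linarith) hπ.le)
  refine le_trans ?_ (Finset.sum_le_sum hstep)
  rw [← Finset.mul_sum, sum_inv_eq_harmonic]
  have hlog : Real.log N ≤ (harmonic (2*N+1) : ℝ) := by
    rcases Nat.eq_zero_or_pos N with h | h
    · rw [h]
      simp only [Nat.cast_zero, Real.log_zero]
      exact_mod_cast (harmonic_pos (by omega)).le
    · calc Real.log N ≤ Real.log ((2*N+1+1 : ℕ):ℝ) :=
            Real.log_le_log (by exact_mod_cast h) (by push_cast; linarith)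
        _ ≤ (harmonic (2*N+1) : ℝ) := log_add_one_le_harmonic (2*N+1)
  have h2π : (0:ℝ) < (2*π)⁻¹ := by positivity
  nlinarith [hlog, h2π]

/-- The norms of the Shannon partial-sum operators
`S_N : PW^1_π → B^∞_π` grow at least logarithmically: there is `C_S > 0` with
`‖S_N‖ ≥ C_S · log N` for all `N`.  (The unit ball of `PW^1_π` consists of the
functions with spectrum `g` satisfying `(1/2π)‖g‖_{L^1([-π,π])} ≤ 1`.) -/
theorem shannon_operator_norm_log_lower_bound :
    ∃ C_S > (0 : ℝ), ∀ N : ℕ,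
      ENNReal.ofReal (C_S * Real.log N) ≤
        ⨆ (g : ℝ → ℂ) (_ : MemLp g 1 (volume.restrict (Set.Icc (-π) π)) ∧
            eLpNorm g 1 (volume.restrict (Set.Icc (-π) π)) ≤ ENNReal.ofReal (2 * π)),
          ⨆ t : ℝ, (‖shannonSum (pwFun g) N t‖₊ : ℝ≥0∞) := by
  refine ⟨(2*π)⁻¹, by positivity, fun N => ?_⟩
  have hval : ENNReal.ofReal ((2*π)⁻¹ * Real.log N) ≤
      (‖shannonSum (pwFun (fejG (2*N))) N ((N:ℝ) + 1/2)‖₊ : ℝ≥0∞) := by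
    rw [← enorm_eq_nnnorm, ← ofReal_norm]
    exact ENNReal.ofReal_le_ofReal (shannon_lower N)
  refine le_trans hval ?_
  refine le_trans
    (le_iSup (fun t => (‖shannonSum (pwFun (fejG (2*N))) N t‖₊ : ℝ≥0∞)) ((N:ℝ)+1/2)) ?_
  exact le_iSup₂ (f := fun g _ => ⨆ t : ℝ, (‖shannonSum (pwFun g) N t‖₊ : ℝ≥0∞))
    (fejG (2*N)) ⟨fejG_memLp _, fejG_eLpNorm _⟩
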